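/- Along an extremal, whenever the switching function φ := λ₂ − λ₁ vanishes at a time t, its derivative satisfies φ̇(t) = λ₂(t) μ′(S₂(t))(M − S₁(t) − S₂(t)); in particular, if λ₂(t) > 0 and 0 < S₁(t)+S₂(t) < M, then φ̇(t) > 0 when S₂(t) < S₂* and φ̇(t) < 0 when S₂(t) > S₂*. -/

import Mathlib

open Set

/-- When the switching function φ = λ₂ − λ₁ vanishes at time t, its derivative equals
λ₂ μ′(S₂)(M − S₁ − S₂); in particular if λ₂(t) > 0 and 0 < S₁+S₂ < M then φ̇(t) > 0
when S₂(t) < S₂* and φ̇(t) < 0 when S₂(t) > S₂*. -/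
theorem stmt15 (M S₂s t : ℝ) (f' μ μ' u S₁ S₂ lam₁ lam₂ : ℝ → ℝ)
    (hμ'pos : ∀ s, 0 ≤ s → s < S₂s → 0 < μ' s)
    (hμ'neg : ∀ s, S₂s < s → μ' s < 0)
    (hlam₁ : HasDerivAt lam₁
      (-(u t) * (lam₂ t - lam₁ t) * f' (S₁ t) - lam₂ t * μ (S₂ t)) t)
    (hlam₂ : HasDerivAt lam₂
      (lam₂ t * (μ' (S₂ t) * (M - S₁ t - S₂ t) - μ (S₂ t))) t)
    (hφ0 : lam₂ t - lam₁ t = 0)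
    (hS₂nn : 0 ≤ S₂ t) :
    HasDerivAt (fun s => lam₂ s - lam₁ s)
      (lam₂ t * μ' (S₂ t) * (M - S₁ t - S₂ t)) t ∧
    (0 < lam₂ t → 0 < S₁ t + S₂ t → S₁ t + S₂ t < M →
      ((S₂ t < S₂s → 0 < lam₂ t * μ' (S₂ t) * (M - S₁ t - S₂ t)) ∧
       (S₂s < S₂ t → lam₂ t * μ' (S₂ t) * (M - S₁ t - S₂ t) < 0))) := by
  constructor
  · have h := hlam₂.sub hlam₁
    convert h using 1
    · rfl
    · rfl
    · rfl
    · rw [hφ0]; ring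
  · intro hl hsum hM
    have hMpos : 0 < M - S₁ t - S₂ t := by linarith
    constructor
    · intro hlt
      have := hμ'pos (S₂ t) hS₂nn hlt
      positivity
    · intro hgt
      have := hμ'neg (S₂ t) hgt
      have : lam₂ t * μ' (S₂ t) < 0 := mul_neg_of_pos_of_neg hl this
      exact mul_neg_of_neg_of_pos this hMpos
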